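/- arXiv:2310.09954 — 3 statements merged into one kernel-verified Lean document; each statement's English description precedes it below -/
import Mathlib

section
/- Let g, r ≥ 1 and δ ≥ 1 be integers with g ≥ (r+δ)(r+δ+1) (so that both d_max(g,r) ≤ g−1 and d_max(g,r+δ) ≤ g−1). Define the real number f(g,r,δ) = (r+1)δ² + ((r+1)(r+1+2√(r+1)) − g)δ + 2(r+1)²√(r+1). If f(g,r,δ) ≤ 0, then κ(g,r,d_max(g,r)) > κ(g,r+δ,d_max(g,r+δ)). -/
noncomputable section

/-- The Brill--Noether number `ρ(g,r,d) = g - (r+1)(g-d+r)`. -/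
def rho (g r d : ℤ) : ℤ := g - (r + 1) * (g - d + r)

/-- Pflueger's Brill--Noether number `ρ_k(g,r,d)`, the maximum of
`ρ(g,r-ℓ,d) - ℓk` over integers `0 ≤ ℓ ≤ min r (g-d+r-1)`. -/
def rhoK (g r d k : ℤ) : ℤ :=
  sSup ((fun ℓ : ℤ => rho g (r - ℓ) d - ℓ * k) '' Set.Icc 0 (min r (g - d + r - 1)))

/-- `κ(g,r,d)`: the greatest integer `k ≥ 1` such that `ρ_k(g,r,d) ≥ 0`. -/
def kappa (g r d : ℤ) : ℤ := sSup {k : ℤ | 1 ≤ k ∧ 0 ≤ rhoK g r d k}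

/-- `d_max(g,r) = r + ⌈gr/(r+1)⌉ - 1`, the largest `d` with `ρ(g,r,d) < 0`. -/
def dmax (g r : ℤ) : ℤ := r + ⌈((g : ℚ) * r) / ((r : ℚ) + 1)⌉ - 1

lemma floor_int_div (g n : ℤ) (hn : 0 < n) : ⌊(g : ℚ) / (n : ℚ)⌋ = g / n := by
  have h := Rat.floor_intCast_div_natCast g n.toNat
  have h3 : ((n.toNat : ℕ) : ℤ) = n := Int.toNat_of_nonneg hn.le
  have h2 : ((n.toNat : ℕ) : ℚ) = (n : ℚ) := by
    exact_mod_cast congrArg (Int.cast : ℤ → ℚ) h3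
  rw [h2, h3] at h
  exact h

lemma ceil_eq (g r : ℤ) (hr : 1 ≤ r) :
    ⌈((g : ℚ) * r) / ((r : ℚ) + 1)⌉ = g - g / (r + 1) := by
  have h0 : ((r : ℚ) + 1) ≠ 0 := by positivity
  have h1 : ((g : ℚ) * r) / ((r : ℚ) + 1) = -((g : ℚ) / ((r : ℚ) + 1)) + (g : ℤ) := by
    field_simp; ring
  rw [h1, Int.ceil_add_intCast, Int.ceil_neg]
  have h2 : ((r : ℚ) + 1) = ((r + 1 : ℤ) : ℚ) := by push_cast; ring
  rw [h2, floor_int_div g (r + 1) (by omega)]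
  ring

lemma rhoK_nonneg_iff {g r d k N : ℤ} (hN : 0 ≤ N) (hmin : min r (g - d + r - 1) = N) :
    0 ≤ rhoK g r d k ↔ ∃ ℓ, 0 ≤ ℓ ∧ ℓ ≤ N ∧ 0 ≤ rho g (r - ℓ) d - ℓ * k := by
  unfold rhoK
  rw [hmin]
  set f : ℤ → ℤ := fun ℓ => rho g (r - ℓ) d - ℓ * k with hf
  have hne : (f '' Set.Icc 0 N).Nonempty := ⟨f 0, ⟨0, ⟨le_refl 0, hN⟩, rfl⟩⟩
  have hbdd : BddAbove (f '' Set.Icc 0 N) := ((Set.finite_Icc 0 N).image f).bddAbove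
  constructor
  · intro h0
    by_contra hc
    push_neg at hc
    have hub : sSup (f '' Set.Icc 0 N) ≤ -1 := by
      apply csSup_le hne
      rintro x ⟨ℓ, ⟨h1, h2⟩, rfl⟩
      have h3 := hc ℓ h1 h2
      show rho g (r - ℓ) d - ℓ * k ≤ -1
      omega
    exact absurd (le_trans h0 hub) (by norm_num)
  · rintro ⟨ℓ, h0, h1, h2⟩
    exact h2.trans (le_csSup hbdd ⟨ℓ, ⟨h0, h1⟩, rfl⟩)

lemma rhoK_dmax_nonneg_iff (g r k : ℤ) (hr : 1 ≤ r) (hq : r ≤ g / (r + 1)) :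
    0 ≤ rhoK g r (dmax g r) k ↔
      ∃ ℓ, 0 ≤ ℓ ∧ ℓ ≤ r ∧
        0 ≤ -(r + 1 - g % (r + 1)) + (g / (r + 1) + r + 2) * ℓ - ℓ ^ 2 - ℓ * k := by
  have hd : dmax g r = r + (g - g / (r + 1)) - 1 := by
    rw [dmax, ceil_eq g r hr]
  have hm : g - dmax g r + r - 1 = g / (r + 1) := by rw [hd]; ring
  have hmin : min r (g - dmax g r + r - 1) = r := by rw [hm]; exact min_eq_left hq
  rw [rhoK_nonneg_iff (by omega) hmin]
  have hrw : ∀ ℓ : ℤ, rho g (r - ℓ) (dmax g r) - ℓ * k =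
      -(r + 1 - g % (r + 1)) + (g / (r + 1) + r + 2) * ℓ - ℓ ^ 2 - ℓ * k := by
    intro ℓ
    have hgq : g = (r + 1) * (g / (r + 1)) + g % (r + 1) := (Int.mul_ediv_add_emod g (r + 1)).symm
    rw [rho, hd]
    linear_combination hgq
  exact ⟨fun ⟨ℓ, a, b, cc⟩ => ⟨ℓ, a, b, by rw [← hrw]; exact cc⟩,
    fun ⟨ℓ, a, b, cc⟩ => ⟨ℓ, a, b, by rw [hrw]; exact cc⟩⟩

lemma exists_ell (r c : ℤ) (hr : 1 ≤ r) (hc1 : 1 ≤ c) (hcr : c ≤ r + 1) :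
    ∃ ℓ : ℤ, 1 ≤ ℓ ∧ ℓ ≤ r ∧ ((ℓ : ℝ) - Real.sqrt c) ^ 2 ≤ 1 := by
  have hc0 : (0:ℝ) ≤ (c:ℝ) := by exact_mod_cast (by omega : (0:ℤ) ≤ c)
  have hs1 : 1 ≤ Real.sqrt c := by
    rw [show (1:ℝ) = Real.sqrt 1 by simp]
    exact Real.sqrt_le_sqrt (by exact_mod_cast hc1)
  rcases eq_or_lt_of_le hr with h1 | h2
  · -- r = 1, take ℓ = 1, c ≤ 2
    refine ⟨1, le_refl 1, by omega, ?_⟩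
    have hc2 : (c:ℝ) ≤ 2 := by exact_mod_cast (by omega : c ≤ 2)
    have hsq : Real.sqrt c * Real.sqrt c = c := Real.mul_self_sqrt hc0
    push_cast
    nlinarith [hs1, hc2, hsq]
  · -- r ≥ 2, take ℓ = ceil sqrt c
    have hr2 : 2 ≤ r := h2
    set a : ℕ := Nat.sqrt c.toNat with ha
    have hct : (c.toNat : ℤ) = c := Int.toNat_of_nonneg (by omega)
    by_cases hsq : a * a = c.toNat
    · refine ⟨(a : ℤ), ?_, ?_, ?_⟩
      · have : 1 ≤ c.toNat := by omega
        have : 1 ≤ a := by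
          by_contra hh
          interval_cases a <;> omega
        exact_mod_cast this
      · -- a ≤ r : a² = c ≤ r+1, if a ≥ r+1 then a² ≥ (r+1)² > r+1 for r ≥ 2
        by_contra hh
        push_neg at hh
        have haz : r + 1 ≤ (a:ℤ) := by omega
        have hac : ((a:ℤ)) * a = c := by rw [← hct]; exact_mod_cast hsq
        nlinarith [haz, hcr, hr2, mul_le_mul haz haz (by omega) (by omega : (0:ℤ) ≤ (a:ℤ))]
      · have hceq : ((a:ℤ):ℝ) = Real.sqrt c := by
          have : ((a:ℤ)) * a = c := by rw [← hct]; exact_mod_cast hsq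
          have h0 : (0:ℝ) ≤ ((a:ℤ):ℝ) := by positivity
          rw [show ((c:ℤ):ℝ) = ((a:ℤ):ℝ) * ((a:ℤ):ℝ) by exact_mod_cast (congrArg (Int.cast : ℤ → ℝ) this.symm)]
          rw [Real.sqrt_mul_self h0]
        rw [hceq]
        simp
    · refine ⟨(a : ℤ) + 1, by omega, ?_, ?_⟩
      · -- a + 1 ≤ r
        have hlt : c.toNat < (a + 1) * (a + 1) := by
          simpa [pow_two] using Nat.lt_succ_sqrt' c.toNat
        have hle : a * a ≤ c.toNat := by simpa [pow_two] using Nat.sqrt_le' c.toNat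
        by_contra hh
        push_neg at hh
        have haz : r ≤ (a:ℤ) := by omega
        have h5 : (a:ℤ) * a ≤ c - 1 := by omega
        nlinarith [haz, hcr, hr2, mul_le_mul haz haz (by omega) (by omega : (0:ℤ) ≤ (a:ℤ))]
      · have hle : a * a ≤ c.toNat := by simpa [pow_two] using Nat.sqrt_le' c.toNat
        have hlt : c.toNat < (a + 1) * (a + 1) := by
          simpa [pow_two] using Nat.lt_succ_sqrt' c.toNat
        have h5 : (a:ℤ) * a ≤ c - 1 := by omega
        have h6 : c ≤ ((a:ℤ) + 1) * ((a:ℤ) + 1) := by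
          have : (c.toNat : ℤ) < ((a:ℤ) + 1) * ((a:ℤ) + 1) := by exact_mod_cast hlt
          omega
        -- real bounds: a ≤ sqrt(c-1)... we need ((a+1) - √c)² ≤ 1,
        -- i.e. 0 ≤ (a+1) - √c ≤ 1, from a² < c ≤ (a+1)²
        have ha0 : (0:ℝ) ≤ ((a:ℤ):ℝ) := by positivity
        have hup : Real.sqrt c ≤ ((a:ℤ):ℝ) + 1 := by
          rw [show ((a:ℤ):ℝ) + 1 = Real.sqrt ((((a:ℤ):ℝ) + 1) ^ 2) by
            rw [Real.sqrt_sq (by positivity)]]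
          apply Real.sqrt_le_sqrt
          have : (c:ℝ) ≤ (((a:ℤ) + 1) * ((a:ℤ) + 1) : ℤ) := by exact_mod_cast h6
          push_cast at this ⊢
          nlinarith [this]
        have hlo : ((a:ℤ):ℝ) ≤ Real.sqrt c := by
          rw [show ((a:ℤ):ℝ) = Real.sqrt (((a:ℤ):ℝ) ^ 2) by rw [Real.sqrt_sq ha0]]
          apply Real.sqrt_le_sqrt
          have : ((a:ℤ) * a : ℤ) ≤ (c : ℤ) := by omega
          have h7 : ((a:ℤ):ℝ) * ((a:ℤ):ℝ) ≤ (c:ℝ) := by exact_mod_cast this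
          nlinarith [h7]
        push_cast at hup hlo ⊢
        nlinarith [hup, hlo]

lemma one_le_sqrt' {a : ℝ} (h : 1 ≤ a) : 1 ≤ Real.sqrt a := by
  rw [show (1:ℝ) = Real.sqrt 1 by simp]
  exact Real.sqrt_le_sqrt h

lemma mem_one (g r : ℤ) (hr : 1 ≤ r) (hq : r ≤ g / (r + 1)) :
    (1:ℤ) ∈ {k : ℤ | 1 ≤ k ∧ 0 ≤ rhoK g r (dmax g r) k} := by
  refine ⟨le_refl 1, ?_⟩
  rw [rhoK_dmax_nonneg_iff g r 1 hr hq]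
  refine ⟨r, by omega, le_refl r, ?_⟩
  have h1 : 0 ≤ g % (r + 1) := Int.emod_nonneg g (by omega)
  nlinarith [mul_le_mul_of_nonneg_right hq (show (0:ℤ) ≤ r by omega), hr, h1,
    mul_pos (show (0:ℤ) < r by omega) (show (0:ℤ) < r by omega)]

lemma kappa_bdd (g r : ℤ) (hr : 1 ≤ r) (hq : r ≤ g / (r + 1)) :
    BddAbove {k : ℤ | 1 ≤ k ∧ 0 ≤ rhoK g r (dmax g r) k} := by
  refine ⟨g / (r + 1) + r + 2, ?_⟩
  rintro k ⟨hk1, hk2⟩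
  rw [rhoK_dmax_nonneg_iff g r k hr hq] at hk2
  obtain ⟨ℓ, h0, h1, h2⟩ := hk2
  have hsr : g % (r + 1) < r + 1 := Int.emod_lt_of_pos g (by omega)
  rcases eq_or_lt_of_le h0 with h3 | h3
  · exfalso; rw [← h3] at h2; linarith
  · nlinarith [h2, sq_nonneg ℓ, h3, hsr]

lemma kappa_ge (g r K : ℤ) (hr : 1 ≤ r) (hq : r ≤ g / (r + 1)) (hK1 : 1 ≤ K)
    (hex : ∃ ℓ, 0 ≤ ℓ ∧ ℓ ≤ r ∧
      0 ≤ -(r + 1 - g % (r + 1)) + (g / (r + 1) + r + 2) * ℓ - ℓ ^ 2 - ℓ * K) :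
    K ≤ kappa g r (dmax g r) := by
  apply le_csSup (kappa_bdd g r hr hq)
  exact ⟨hK1, (rhoK_dmax_nonneg_iff g r K hr hq).mpr hex⟩

lemma kappa_le (g r B : ℤ) (hr : 1 ≤ r) (hq : r ≤ g / (r + 1))
    (hB : ∀ k ℓ : ℤ, 1 ≤ k → 1 ≤ ℓ → ℓ ≤ r →
      0 ≤ -(r + 1 - g % (r + 1)) + (g / (r + 1) + r + 2) * ℓ - ℓ ^ 2 - ℓ * k → k ≤ B) :
    kappa g r (dmax g r) ≤ B := by
  apply csSup_le ⟨1, mem_one g r hr hq⟩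
  rintro k ⟨hk1, hk2⟩
  rw [rhoK_dmax_nonneg_iff g r k hr hq] at hk2
  obtain ⟨ℓ, h0, h1, h2⟩ := hk2
  rcases eq_or_lt_of_le h0 with h3 | h3
  · exfalso
    rw [← h3] at h2
    have hsr : g % (r + 1) < r + 1 := Int.emod_lt_of_pos g (by omega)
    linarith
  · exact hB k ℓ hk1 h3 h1 h2

set_option maxHeartbeats 2000000 in
theorem stmt11 (g r δ : ℤ) (hg : 1 ≤ g) (hr : 1 ≤ r) (hδ : 1 ≤ δ)
    (h : (r + δ) * (r + δ + 1) ≤ g)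
    (hf : ((r : ℝ) + 1) * (δ : ℝ) ^ 2 +
        (((r : ℝ) + 1) * ((r : ℝ) + 1 + 2 * Real.sqrt ((r : ℝ) + 1)) - (g : ℝ)) * (δ : ℝ) +
        2 * ((r : ℝ) + 1) ^ 2 * Real.sqrt ((r : ℝ) + 1) ≤ 0) :
    kappa g (r + δ) (dmax g (r + δ)) < kappa g r (dmax g r) := by
  have hR : (0:ℤ) < r + 1 := by omega
  have hR' : (0:ℤ) < r + δ + 1 := by omega
  have hsmod : 0 ≤ g % (r + 1) := Int.emod_nonneg g (by omega)
  have hsmod2 : g % (r + 1) < r + 1 := Int.emod_lt_of_pos g hR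
  have hsmod' : 0 ≤ g % (r + δ + 1) := Int.emod_nonneg g (by omega)
  have hsmod2' : g % (r + δ + 1) < r + δ + 1 := Int.emod_lt_of_pos g hR'
  have hgq : g = (r + 1) * (g / (r + 1)) + g % (r + 1) := (Int.mul_ediv_add_emod g (r + 1)).symm
  have hgq' : g = (r + δ + 1) * (g / (r + δ + 1)) + g % (r + δ + 1) :=
    (Int.mul_ediv_add_emod g (r + δ + 1)).symm
  have hq2 : r + 2 ≤ g / (r + 1) := by
    rw [Int.le_ediv_iff_mul_le hR]
    nlinarith [h, mul_nonneg (show (0:ℤ) ≤ δ - 1 by omega) (show (0:ℤ) ≤ 2*r + δ + 2 by omega)]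
  have hq2' : r + δ ≤ g / (r + δ + 1) := by
    rw [Int.le_ediv_iff_mul_le hR']
    exact h
  -- choose ℓ₀ близко к √c
  obtain ⟨ℓ₀, hℓ1, hℓr, hℓkey⟩ :=
    exists_ell r (r + 1 - g % (r + 1)) hr (by omega) (by omega)
  have hl0pos : (0:ℤ) < ℓ₀ := hℓ1
  have hdm := Int.mul_ediv_add_emod (r + 1 - g % (r + 1) + ℓ₀ - 1) ℓ₀
  have hmod0 : 0 ≤ (r + 1 - g % (r + 1) + ℓ₀ - 1) % ℓ₀ := Int.emod_nonneg _ (by omega)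
  have hmodlt : (r + 1 - g % (r + 1) + ℓ₀ - 1) % ℓ₀ < ℓ₀ := Int.emod_lt_of_pos _ hl0pos
  obtain ⟨t0, ht0def⟩ : ∃ t0 : ℤ, t0 = (r + 1 - g % (r + 1) + ℓ₀ - 1) / ℓ₀ := ⟨_, rfl⟩
  rw [← ht0def] at hdm
  have hts1 : r + 1 - g % (r + 1) ≤ ℓ₀ * t0 := by linarith
  have hts2 : ℓ₀ * t0 ≤ r + 1 - g % (r + 1) + ℓ₀ - 1 := by linarith
  have ht0c : t0 ≤ r + 1 - g % (r + 1) := by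
    nlinarith [hts2, hℓ1, hsmod2,
      mul_nonneg (show (0:ℤ) ≤ r + 1 - g % (r + 1) - 1 by omega)
        (show (0:ℤ) ≤ ℓ₀ - 1 by omega)]
  have hK1 : 1 ≤ g / (r + 1) + r + 2 - ℓ₀ - t0 := by linarith
  -- lower bound for kappa at level r
  have hKge : g / (r + 1) + r + 2 - ℓ₀ - t0 ≤ kappa g r (dmax g r) := by
    apply kappa_ge g r _ hr (by linarith) hK1
    exact ⟨ℓ₀, by omega, hℓr, by nlinarith [hts1]⟩
  -- real quantities
  obtain ⟨x, hxdef⟩ : ∃ x : ℝ, x = Real.sqrt ((r + 1 - g % (r + 1) : ℤ) : ℝ) := ⟨_, rfl⟩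
  obtain ⟨y, hydef⟩ : ∃ y : ℝ, y = Real.sqrt ((r + δ + 1 - g % (r + δ + 1) : ℤ) : ℝ) := ⟨_, rfl⟩
  obtain ⟨t, htdef⟩ : ∃ t : ℝ, t = Real.sqrt ((r : ℝ) + 1) := ⟨_, rfl⟩
  rw [← hxdef] at hℓkey
  rw [← htdef] at hf
  have hrR : (1:ℝ) ≤ (r:ℝ) := by exact_mod_cast hr
  have hδR : (1:ℝ) ≤ (δ:ℝ) := by exact_mod_cast hδ
  have hx2 : x ^ 2 = (r:ℝ) + 1 - ((g % (r + 1) : ℤ) : ℝ) := by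
    rw [hxdef, Real.sq_sqrt (by exact_mod_cast (by omega : (0:ℤ) ≤ r + 1 - g % (r + 1)))]
    push_cast
    ring
  have hy2 : y ^ 2 = (r:ℝ) + (δ:ℝ) + 1 - ((g % (r + δ + 1) : ℤ) : ℝ) := by
    rw [hydef, Real.sq_sqrt (by exact_mod_cast (by omega : (0:ℤ) ≤ r + δ + 1 - g % (r + δ + 1)))]
    push_cast
    ring
  have ht2 : t ^ 2 = (r:ℝ) + 1 := by
    rw [htdef, Real.sq_sqrt (by linarith)]
  have hx1 : 1 ≤ x := by
    rw [hxdef]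
    exact one_le_sqrt' (by exact_mod_cast (by omega : (1:ℤ) ≤ r + 1 - g % (r + 1)))
  have hy1 : 1 ≤ y := by
    rw [hydef]
    exact one_le_sqrt' (by exact_mod_cast (by omega : (1:ℤ) ≤ r + δ + 1 - g % (r + δ + 1)))
  have ht1 : 1 ≤ t := by
    rw [htdef]
    exact one_le_sqrt' (by linarith)
  have hxt : x ≤ t := by
    rw [hxdef, htdef]
    apply Real.sqrt_le_sqrt
    have : ((r + 1 - g % (r + 1) : ℤ) : ℝ) ≤ ((r + 1 : ℤ) : ℝ) := by
      exact_mod_cast (by omega : r + 1 - g % (r + 1) ≤ r + 1)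
    push_cast at this ⊢
    linarith
  have htle : t ≤ (r:ℝ) + 1 := by
    have h7 : (0:ℝ) ≤ (t - 1) * t := mul_nonneg (by linarith) (by linarith)
    linarith [ht2]
  -- x bound inequality (A)
  have hA2 : (2*x - 2*t + 1) * ((r:ℝ) + 1) ≤ (r:ℝ) + 1 - ((g % (r + 1) : ℤ) : ℝ) := by
    have hP : (0:ℝ) ≤ (t - x) * (2*((r:ℝ)+1) - t - x) :=
      mul_nonneg (by linarith) (by linarith)
    linarith [hP, ht2, hx2]
  -- y bound inequality (B)
  have hyc : y ≤ (r:ℝ) + (δ:ℝ) + 1 - ((g % (r + δ + 1) : ℤ) : ℝ) := by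
    have h7 : (0:ℝ) ≤ (y - 1) * y := mul_nonneg (by linarith) (by linarith)
    linarith [hy2]
  have hcR' : (r:ℝ) + (δ:ℝ) + 1 - ((g % (r + δ + 1) : ℤ) : ℝ) ≤ (r:ℝ) + (δ:ℝ) + 1 := by
    have : (0:ℝ) ≤ ((g % (r + δ + 1) : ℤ) : ℝ) := by exact_mod_cast hsmod'
    linarith
  have hB2 : 2*((r:ℝ) + (δ:ℝ) + 1) - 1 ≤
      2*y*((r:ℝ) + (δ:ℝ) + 1) - ((r:ℝ) + (δ:ℝ) + 1 - ((g % (r + δ + 1) : ℤ) : ℝ)) := by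
    have hQ : (0:ℝ) ≤ (y - 1) * (2*((r:ℝ)+(δ:ℝ)+1) - y - 1) :=
      mul_nonneg (by linarith) (by linarith [hyc, hcR'])
    linarith [hQ, hy2]
  -- (C): from hf
  have hC2 : ((δ:ℝ) + 2*t) * (((r:ℝ) + 1) * ((r:ℝ) + (δ:ℝ) + 1)) ≤ (g:ℝ) * (δ:ℝ) := by
    nlinarith [hf]
  -- exact identity for q - q'
  have hgqR : (g:ℝ) = ((r:ℝ) + 1) * ((g / (r + 1) : ℤ) : ℝ) + ((g % (r + 1) : ℤ) : ℝ) := by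
    exact_mod_cast congrArg (Int.cast : ℤ → ℝ) hgq
  have hgqR' : (g:ℝ) = ((r:ℝ) + (δ:ℝ) + 1) * ((g / (r + δ + 1) : ℤ) : ℝ) +
      ((g % (r + δ + 1) : ℤ) : ℝ) := by
    have := congrArg (Int.cast : ℤ → ℝ) hgq'
    push_cast at this
    linarith [this]
  have hmain : (((g / (r + 1) : ℤ) : ℝ) - ((g / (r + δ + 1) : ℤ) : ℝ)) *
        (((r:ℝ) + 1) * ((r:ℝ) + (δ:ℝ) + 1)) =
      (g:ℝ) * (δ:ℝ) + ((r:ℝ) + 1 - ((g % (r + 1) : ℤ) : ℝ)) * ((r:ℝ) + (δ:ℝ) + 1) -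
        ((r:ℝ) + (δ:ℝ) + 1 - ((g % (r + δ + 1) : ℤ) : ℝ)) * ((r:ℝ) + 1) := by
    push_cast at hgqR hgqR' ⊢
    linear_combination (-((r:ℝ) + (δ:ℝ) + 1)) * hgqR + ((r:ℝ) + 1) * hgqR'
  have hA3 := mul_le_mul_of_nonneg_right hA2 (show (0:ℝ) ≤ (r:ℝ) + (δ:ℝ) + 1 by linarith)
  have hB3 := mul_le_mul_of_nonneg_right hB2 (show (0:ℝ) ≤ (r:ℝ) + 1 by linarith)
  have hpos : (0:ℝ) < (2*((r:ℝ) + (δ:ℝ) + 1) - 1) * ((r:ℝ) + 1) :=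
    mul_pos (by linarith) (by linarith)
  have hgapm : (((g / (r + δ + 1) : ℤ) : ℝ) + (r:ℝ) + (δ:ℝ) + 2 - 2*y) *
        (((r:ℝ) + 1) * ((r:ℝ) + (δ:ℝ) + 1)) <
      (((g / (r + 1) : ℤ) : ℝ) + (r:ℝ) + 1 - 2*x) *
        (((r:ℝ) + 1) * ((r:ℝ) + (δ:ℝ) + 1)) := by
    linarith [hmain, hC2, hA3, hB3, hpos]
  have hRRpos : (0:ℝ) < ((r:ℝ) + 1) * ((r:ℝ) + (δ:ℝ) + 1) :=
    mul_pos (by linarith) (by linarith)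
  have hgap : ((g / (r + δ + 1) : ℤ) : ℝ) + (r:ℝ) + (δ:ℝ) + 2 - 2*y <
      ((g / (r + 1) : ℤ) : ℝ) + (r:ℝ) + 1 - 2*x :=
    lt_of_mul_lt_mul_right hgapm hRRpos.le
  -- K lower bound, real form
  have hl0R : (0:ℝ) < (ℓ₀:ℝ) := by exact_mod_cast hl0pos
  have hts2R : (ℓ₀:ℝ) * (t0:ℝ) ≤ ((r:ℝ) + 1 - ((g % (r + 1) : ℤ) : ℝ)) + (ℓ₀:ℝ) - 1 := by
    have := congrArg (Int.cast : ℤ → ℝ) (rfl : ℓ₀ * t0 = ℓ₀ * t0)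
    have h5 : ((ℓ₀ * t0 : ℤ) : ℝ) ≤ ((r + 1 - g % (r + 1) + ℓ₀ - 1 : ℤ) : ℝ) := by
      exact_mod_cast hts2
    push_cast at h5
    linarith
  have hsum : ((ℓ₀:ℝ) + (t0:ℝ)) * (ℓ₀:ℝ) ≤ (2*x + 1) * (ℓ₀:ℝ) := by
    linarith [hts2R, hℓkey, hx2]
  have hsum2 : (ℓ₀:ℝ) + (t0:ℝ) ≤ 2*x + 1 := le_of_mul_le_mul_right hsum hl0R
  -- upper bound for kappa at level r+δ
  have hup : kappa g (r + δ) (dmax g (r + δ)) ≤ g / (r + 1) + r + 2 - ℓ₀ - t0 - 1 := by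
    apply kappa_le g (r + δ) _ (by omega) (by linarith)
    intro k ℓ hk1 hℓ1' hℓr' hexpr
    have hlposR : (0:ℝ) < (ℓ:ℝ) := by exact_mod_cast (show (0:ℤ) < ℓ by omega)
    have hexprR : (0:ℝ) ≤ -((r:ℝ) + (δ:ℝ) + 1 - ((g % (r + δ + 1) : ℤ) : ℝ)) +
        (((g / (r + δ + 1) : ℤ) : ℝ) + (r:ℝ) + (δ:ℝ) + 2) * (ℓ:ℝ) - (ℓ:ℝ)^2 -
        (ℓ:ℝ) * (k:ℝ) := by
      have h6 : (0:ℝ) ≤ ((-(r + δ + 1 - g % (r + δ + 1)) +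
          (g / (r + δ + 1) + (r + δ) + 2) * ℓ - ℓ ^ 2 - ℓ * k : ℤ) : ℝ) := by
        exact_mod_cast hexpr
      push_cast at h6
      linarith
    have hamgm : 2*y*(ℓ:ℝ) ≤ (ℓ:ℝ)^2 + ((r:ℝ) + (δ:ℝ) + 1 - ((g % (r + δ + 1) : ℤ) : ℝ)) := by
      linarith [sq_nonneg ((ℓ:ℝ) - y), hy2]
    have h9 : (k:ℝ) * (ℓ:ℝ) ≤
        (((g / (r + δ + 1) : ℤ) : ℝ) + (r:ℝ) + (δ:ℝ) + 2 - 2*y) * (ℓ:ℝ) := by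
      linarith [hexprR, hamgm]
    have hkup : (k:ℝ) ≤ ((g / (r + δ + 1) : ℤ) : ℝ) + (r:ℝ) + (δ:ℝ) + 2 - 2*y :=
      le_of_mul_le_mul_right h9 hlposR
    have hfinal : (k:ℝ) < ((g / (r + 1) + r + 2 - ℓ₀ - t0 : ℤ) : ℝ) := by
      have hKcast : ((g / (r + 1) + r + 2 - ℓ₀ - t0 : ℤ) : ℝ) =
          ((g / (r + 1) : ℤ) : ℝ) + (r:ℝ) + 2 - (ℓ₀:ℝ) - (t0:ℝ) := by
        push_cast
        ring
      rw [hKcast]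
      linarith [hkup, hgap, hsum2]
    have : k < g / (r + 1) + r + 2 - ℓ₀ - t0 := by exact_mod_cast hfinal
    linarith
  linarith [hKge, hup]
end
end

section
/- Let g, r, d, s, e be positive integers with d ≤ g − 1, e ≤ g − 1, r ≠ s, and ρ(g,r,d) = ρ(g,s,e) = −1. Then γ(r,d) ≠ γ(s,e), and if γ(r,d) < γ(s,e) then κ(g,r,d) > κ(g,s,e). -/
noncomputable section

lemma rhoK_eq_of_min (g r d k : ℤ) (h : min r (g - d + r - 1) = r) :
    rhoK g r d k = sSup ((fun ℓ : ℤ => rho g (r - ℓ) d - ℓ * k) '' Set.Icc 0 r) := by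
  rw [rhoK, h]

lemma kappa_eq (g r d : ℤ) (hr : 1 ≤ r) (hm : r + 1 ≤ g - d + r)
    (hrho : rho g r d = -1) : kappa g r d = r + (g - d + r) - 1 := by
  set m := g - d + r with hmdef
  have hmin : min r (g - d + r - 1) = r := min_eq_left (by omega)
  have hrho' : g - (r + 1) * m = -1 := hrho
  -- upper bounds are bounded
  have hbdd : ∀ k : ℤ, BddAbove ((fun ℓ : ℤ => rho g (r - ℓ) d - ℓ * k) '' Set.Icc 0 r) :=
    fun k => ((Set.finite_Icc 0 r).image _).bddAbove
  have hA : ∀ k : ℤ, k ≤ r + m - 1 → 0 ≤ rhoK g r d k := by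
    intro k hk
    rw [rhoK_eq_of_min g r d k hmin]
    have h1mem : (1 : ℤ) ∈ Set.Icc (0 : ℤ) r := ⟨by omega, by omega⟩
    have hle := le_csSup (hbdd k) (Set.mem_image_of_mem _ h1mem)
    have hval : rho g (r - 1) d - 1 * k = -1 + (r + 1 + m - 1 - k) := by
      unfold rho
      linear_combination hrho'
    rw [hval] at hle
    omega
  have hB : ∀ k : ℤ, r + m ≤ k → rhoK g r d k ≤ -1 := by
    intro k hk
    rw [rhoK_eq_of_min g r d k hmin]
    apply csSup_le
    · exact (Set.nonempty_Icc.mpr (by omega)).image _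
    · rintro b ⟨ℓ, ⟨h0, hL⟩, rfl⟩
      have hid : rho g (r - ℓ) d - ℓ * k = -1 + ℓ * (r + 1 + m - ℓ - k) := by
        unfold rho
        linear_combination hrho'
      simp only
      rw [hid]
      rcases h0.eq_or_lt with h | h
      · simp [← h]
      · have h1 : 1 ≤ ℓ := h
        have hfac : r + 1 + m - ℓ - k ≤ 0 := by omega
        nlinarith
  have hSet : {k : ℤ | 1 ≤ k ∧ 0 ≤ rhoK g r d k} = Set.Icc 1 (r + m - 1) := by
    ext k
    constructor
    · rintro ⟨hk1, hk2⟩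
      refine ⟨hk1, ?_⟩
      by_contra hcon
      have := hB k (by omega)
      omega
    · rintro ⟨hk1, hk2⟩
      exact ⟨hk1, hA k hk2⟩
  rw [kappa, hSet, csSup_Icc (by omega)]

theorem stmt16 (g r d s e : ℤ) (hg : 1 ≤ g) (hr : 1 ≤ r) (hd : 1 ≤ d)
    (hs : 1 ≤ s) (he : 1 ≤ e) (hdg : d ≤ g - 1) (heg : e ≤ g - 1) (hrs : r ≠ s)
    (h1 : rho g r d = -1) (h2 : rho g s e = -1) :
    d - 2 * r ≠ e - 2 * s ∧ (d - 2 * r < e - 2 * s → kappa g s e < kappa g r d) := by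
  set m := g - d + r with hmdef
  set n := g - e + s with hndef
  have hrm : (r + 1) * m = g + 1 := by rw [hmdef]; unfold rho at h1; linear_combination -h1
  have hsn : (s + 1) * n = g + 1 := by rw [hndef]; unfold rho at h2; linear_combination -h2
  have hm : r + 1 ≤ m := by omega
  have hn : s + 1 ≤ n := by omega
  have hkr : kappa g r d = r + m - 1 := kappa_eq g r d hr hm h1
  have hks : kappa g s e = s + n - 1 := kappa_eq g s e hs hn h2
  constructor
  · intro hgam
    -- d - 2r = g - r - m, e - 2s = g - s - n, so r + m = s + n
    have hsum : r + m = s + n := by omega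
    have hkey : (s - r) * (m - s - 1) = 0 := by
      have hn' : n = r + m - s := by omega
      rw [hn'] at hsn
      linear_combination hsn - hrm
    rcases mul_eq_zero.mp hkey with h | h
    · exact hrs (by omega)
    · -- m = s + 1, then n = r + 1, and hm, hn force r = s
      have : m = s + 1 := by omega
      omega
  · intro hlt
    rw [hkr, hks]
    omega
end
end

section
/- For every integer α ≥ 3, one has κ(2α² + α − 2, α − 1, 2α² − 4) = 3α − 2 and κ(2α² + α − 2, α, 2α² − 1) = 3α − 2. In particular, these two values of κ are equal. -/
noncomputable section

lemma le_rhoK (g r d k ℓ : ℤ) (h : ℓ ∈ Set.Icc 0 (min r (g - d + r - 1))) :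
    rho g (r - ℓ) d - ℓ * k ≤ rhoK g r d k :=
  le_csSup ((Set.finite_Icc _ _).image _).bddAbove ⟨ℓ, h, rfl⟩

lemma rhoK_le (g r d k B : ℤ) (h0 : 0 ≤ min r (g - d + r - 1))
    (hb : ∀ ℓ ∈ Set.Icc (0:ℤ) (min r (g - d + r - 1)), rho g (r - ℓ) d - ℓ * k ≤ B) :
    rhoK g r d k ≤ B :=
  csSup_le ⟨_, ⟨0, ⟨le_refl 0, h0⟩, rfl⟩⟩ (by rintro x ⟨ℓ, hℓ, rfl⟩; exact hb ℓ hℓ)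

lemma kappa_eq_s18 (g r d K : ℤ) (h1 : 1 ≤ K) (h2 : 0 ≤ rhoK g r d K)
    (h3 : ∀ k, K < k → rhoK g r d k < 0) : kappa g r d = K := by
  have hub : ∀ k ∈ {k : ℤ | 1 ≤ k ∧ 0 ≤ rhoK g r d k}, k ≤ K := by
    rintro k ⟨hk1, hk2⟩
    by_contra h
    exact absurd hk2 (not_le.2 (h3 k (not_le.1 h)))
  exact le_antisymm (csSup_le ⟨K, h1, h2⟩ hub) (le_csSup ⟨K, hub⟩ ⟨h1, h2⟩)

theorem stmt18 (α : ℤ) (hα : 3 ≤ α) :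
    kappa (2 * α ^ 2 + α - 2) (α - 1) (2 * α ^ 2 - 4) = 3 * α - 2 ∧
    kappa (2 * α ^ 2 + α - 2) α (2 * α ^ 2 - 1) = 3 * α - 2 := by
  constructor
  · apply kappa_eq_s18 _ _ _ _ (by linarith)
    · have h := le_rhoK (2 * α ^ 2 + α - 2) (α - 1) (2 * α ^ 2 - 4) (3 * α - 2) 1
        (by constructor <;> simp <;> omega)
      have : rho (2 * α ^ 2 + α - 2) (α - 1 - 1) (2 * α ^ 2 - 4) - 1 * (3 * α - 2) = 0 := by
        simp [rho]; ring
      linarith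
    · intro k hk
      have h := rhoK_le (2 * α ^ 2 + α - 2) (α - 1) (2 * α ^ 2 - 4) k (-1)
        (by omega) ?_
      · linarith
      · rintro ℓ ⟨hℓ0, hℓ1⟩
        simp only [rho]
        nlinarith [sq_nonneg (ℓ - 1), mul_nonneg hℓ0 (by linarith : (0:ℤ) ≤ k - (3*α - 1))]
  · apply kappa_eq_s18 _ _ _ _ (by linarith)
    · have h := le_rhoK (2 * α ^ 2 + α - 2) α (2 * α ^ 2 - 1) (3 * α - 2) 1
        (by constructor <;> simp <;> omega)
      have : rho (2 * α ^ 2 + α - 2) (α - 1) (2 * α ^ 2 - 1) - 1 * (3 * α - 2) = 0 := by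
        simp [rho]; ring
      linarith
    · intro k hk
      have h := rhoK_le (2 * α ^ 2 + α - 2) α (2 * α ^ 2 - 1) k (-1)
        (by omega) ?_
      · linarith
      · rintro ℓ ⟨hℓ0, hℓ1⟩
        simp only [rho]
        nlinarith [sq_nonneg (ℓ - 1), mul_nonneg hℓ0 (by linarith : (0:ℤ) ≤ k - (3*α - 1))]
end
end
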